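/- Let k = n − m and let U_k ∈ ℝ^{n×k} be a matrix whose columns form an orthonormal basis of the null space of J. Then U_kᵀ M U_k = U_kᵀ g U_k, the k×k matrix U_kᵀ g U_k is invertible, and its inverse is (U_kᵀ g U_k)⁻¹ = U_kᵀ N U_k. -/

import Mathlib

open Matrix

/-- Two matrices with equal `mulVec` action are equal. -/
lemma matrix_eq_of_mulVec_eq {m n : ℕ} {A B : Matrix (Fin m) (Fin n) ℝ}
    (h : ∀ x, A *ᵥ x = B *ᵥ x) : A = B := by
  ext i j
  have := congrFun (h (Pi.single j 1)) i
  simpa using this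

/-- If the columns of `U` form an orthonormal basis of the null space of `J`
(`k = n − m`), then `Uᵀ M U = Uᵀ g U`, the matrix `Uᵀ g U` is invertible, and
`(Uᵀ g U)⁻¹ = Uᵀ N U`. -/
theorem restricted_metric_inverse {n m : ℕ} (hm : 0 < m) (hmn : m < n)
    (J : Matrix (Fin m) (Fin n) ℝ) (hJ : J.rank = m)
    (g : Matrix (Fin n) (Fin n) ℝ) (hg : g.PosDef)
    (hJJ : IsUnit (J * Jᵀ).det) (hJgJ : IsUnit (J * g⁻¹ * Jᵀ).det)
    (Q M N : Matrix (Fin n) (Fin n) ℝ)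
    (hQ : Q = 1 - Jᵀ * (J * Jᵀ)⁻¹ * J)
    (hM : M = Q * g * Q)
    (hN : N = g⁻¹ - g⁻¹ * Jᵀ * (J * g⁻¹ * Jᵀ)⁻¹ * J * g⁻¹)
    (U : Matrix (Fin n) (Fin (n - m)) ℝ)
    (hUorth : Uᵀ * U = 1)
    (hUspan : LinearMap.range U.mulVecLin = LinearMap.ker J.mulVecLin) :
    Uᵀ * M * U = Uᵀ * g * U ∧ IsUnit (Uᵀ * g * U).det ∧
      (Uᵀ * g * U)⁻¹ = Uᵀ * N * U := by
  have hgd : IsUnit g.det := hg.det_pos.ne'.isUnit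
  -- J * U = 0
  have hJU : J * U = 0 := by
    apply matrix_eq_of_mulVec_eq
    intro x
    have hx : U *ᵥ x ∈ LinearMap.ker J.mulVecLin := by
      rw [← hUspan]; exact ⟨x, rfl⟩
    have hx' : J *ᵥ (U *ᵥ x) = 0 := hx
    simpa [Matrix.mulVec_mulVec] using hx'
  have hUJ : Uᵀ * Jᵀ = 0 := by
    have := congrArg Matrix.transpose hJU
    simpa [Matrix.transpose_mul] using this
  have hQU : Q * U = U := by
    rw [hQ, Matrix.sub_mul, Matrix.one_mul, Matrix.mul_assoc, Matrix.mul_assoc, hJU]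
    simp
  have hUQ : Uᵀ * Q = Uᵀ := by
    rw [hQ, Matrix.mul_sub, Matrix.mul_one,
      show Uᵀ * (Jᵀ * (J * Jᵀ)⁻¹ * J) = (Uᵀ * Jᵀ) * ((J * Jᵀ)⁻¹ * J) by
        simp [Matrix.mul_assoc], hUJ]
    simp
  have part1 : Uᵀ * M * U = Uᵀ * g * U := by
    rw [hM, show Uᵀ * (Q * g * Q) * U = Uᵀ * Q * (g * (Q * U)) by
      simp [Matrix.mul_assoc], hQU, hUQ, Matrix.mul_assoc]
  -- J * N = 0
  have hJN : J * N = 0 := by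
    have key : (J * g⁻¹ * Jᵀ) * (J * g⁻¹ * Jᵀ)⁻¹ = 1 := Matrix.mul_nonsing_inv _ hJgJ
    rw [hN, Matrix.mul_sub,
      show J * (g⁻¹ * Jᵀ * (J * g⁻¹ * Jᵀ)⁻¹ * J * g⁻¹)
          = ((J * g⁻¹ * Jᵀ) * (J * g⁻¹ * Jᵀ)⁻¹) * (J * g⁻¹) by
        simp [Matrix.mul_assoc], key]
    simp [Matrix.mul_assoc]
  -- U Uᵀ N = N
  have hUUN : U * (Uᵀ * N) = N := by
    apply matrix_eq_of_mulVec_eq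
    intro x
    have hmem : N *ᵥ x ∈ LinearMap.range U.mulVecLin := by
      rw [hUspan]
      have : J *ᵥ (N *ᵥ x) = 0 := by
        rw [Matrix.mulVec_mulVec, hJN]; simp
      simpa [LinearMap.mem_ker, Matrix.mulVecLin_apply] using this
    obtain ⟨c, hc⟩ := hmem
    have hc' : U *ᵥ c = N *ᵥ x := by
      simpa [Matrix.mulVecLin_apply] using hc
    calc (U * (Uᵀ * N)) *ᵥ x = U *ᵥ (Uᵀ *ᵥ (N *ᵥ x)) := by
          simp [Matrix.mulVec_mulVec]
      _ = U *ᵥ (Uᵀ *ᵥ (U *ᵥ c)) := by rw [hc']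
      _ = (U * (Uᵀ * U)) *ᵥ c := by simp [Matrix.mulVec_mulVec]
      _ = U *ᵥ c := by rw [hUorth, Matrix.mul_one]
      _ = N *ᵥ x := hc'
  -- injectivity of U
  have hUinj : ∀ x : Fin (n - m) → ℝ, U *ᵥ x = 0 → x = 0 := by
    intro x hx
    have h1 : (Uᵀ * U) *ᵥ x = Uᵀ *ᵥ (U *ᵥ x) := by simp [Matrix.mulVec_mulVec]
    rw [hUorth, hx] at h1
    simpa using h1
  have hpos : (Uᵀ * g * U).PosDef := by
    rw [Matrix.posDef_iff_dotProduct_mulVec]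
    constructor
    · have := Matrix.isHermitian_conjTranspose_mul_mul U hg.1
      simpa using this
    · intro x hx
      have hUx : U *ᵥ x ≠ 0 := fun h => hx (hUinj x h)
      have := hg.dotProduct_mulVec_pos hUx
      simpa [Matrix.dotProduct_mulVec, ← Matrix.vecMul_vecMul,
        Matrix.vecMul_transpose] using this
  have hdet : IsUnit (Uᵀ * g * U).det := hpos.det_pos.ne'.isUnit
  -- right inverse
  have hgN : g * N = 1 - Jᵀ * ((J * g⁻¹ * Jᵀ)⁻¹ * (J * g⁻¹)) := by
    rw [hN, Matrix.mul_sub, Matrix.mul_nonsing_inv g hgd]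
    congr 1
    rw [show g * (g⁻¹ * Jᵀ * (J * g⁻¹ * Jᵀ)⁻¹ * J * g⁻¹)
        = (g * g⁻¹) * (Jᵀ * ((J * g⁻¹ * Jᵀ)⁻¹ * (J * g⁻¹))) by
      simp [Matrix.mul_assoc], Matrix.mul_nonsing_inv g hgd, one_mul]
  have key : (Uᵀ * g * U) * (Uᵀ * N * U) = 1 := by
    have h1 : (Uᵀ * g * U) * (Uᵀ * N * U) = Uᵀ * (g * (U * (Uᵀ * N))) * U := by
      simp [Matrix.mul_assoc]
    rw [h1, hUUN, hgN, Matrix.mul_sub, Matrix.mul_one, Matrix.sub_mul,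
      show Uᵀ * (Jᵀ * ((J * g⁻¹ * Jᵀ)⁻¹ * (J * g⁻¹)))
          = (Uᵀ * Jᵀ) * ((J * g⁻¹ * Jᵀ)⁻¹ * (J * g⁻¹)) by
        simp [Matrix.mul_assoc], hUJ]
    simp [hUorth]
  exact ⟨part1, hdet, Matrix.inv_eq_right_inv key⟩
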